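/- Let m ≥ 0, α, β ∈ ℝ and let (u,v), (ũ,ṽ) : [0,τ] → ℂ² be two solutions of the nonlinear Dirac ODE system w' = (i m v + i α u|v|² + 2iβ(conj(u)v + u·conj(v))v, i m u + i α v|u|² + 2iβ(conj(u)v + u·conj(v))u). Set U = u - ũ, V = v - ṽ, L(s) = |U(s)|² + |V(s)|², and D(s) = |U(s)|²(|v(s)|² + |ṽ(s)|²) + |V(s)|²(|u(s)|² + |ũ(s)|²). Then with C* = 4(|α| + 4|β|), one has dL/ds ≤ 2·C*·D(s) for all s ∈ [0,τ]. -/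

import Mathlib

open Complex

lemma sqcast (z : ℂ) : ((‖z‖:ℂ))^2 = z * (starRingEnd ℂ) z := by
  rw [Complex.mul_conj]
  norm_cast
  rw [Complex.normSq_eq_norm_sq]

lemma canc (m : ℝ) (z w : ℂ) :
    ((starRingEnd ℂ) z * (Complex.I*m*w)).re + ((starRingEnd ℂ) w * (Complex.I*m*z)).re = 0 := by
  simp [Complex.mul_re, Complex.mul_im]
  ring

lemma re_le (z : ℂ) : z.re ≤ ‖z‖ := by
  exact Complex.re_le_norm z

lemma young (a b p q pt qt A B : ℝ) (hA : 0 ≤ A) (hB : 0 ≤ B) :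
    2*(A*(a*(a*q*q+pt*b*q+pt*qt*b)) + A*(b*(b*p*p+qt*a*p+qt*pt*a))
      + 2*B*(a*(2*(p*q)*b+(a*q+pt*b+a*q+pt*b)*qt))
      + 2*B*(b*(2*(p*q)*a+(a*q+pt*b+a*q+pt*b)*pt)))
    ≤ 2*(4*(A+4*B))*(a^2*(q^2+qt^2)+b^2*(p^2+pt^2)) := by
  nlinarith [mul_nonneg hA (sq_nonneg (a*q - pt*b)),
    mul_nonneg hA (sq_nonneg (a*qt - pt*b)),
    mul_nonneg hA (sq_nonneg (a*qt - b*p)),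
    mul_nonneg hB (sq_nonneg (a*q - pt*b)),
    mul_nonneg hB (sq_nonneg (a*q - b*p)),
    mul_nonneg hB (sq_nonneg (a*qt - pt*b)),
    mul_nonneg hB (sq_nonneg (a*q - a*qt)),
    mul_nonneg hA (sq_nonneg (a*q)), mul_nonneg hA (sq_nonneg (a*qt)),
    mul_nonneg hA (sq_nonneg (b*p)), mul_nonneg hA (sq_nonneg (b*pt)),
    mul_nonneg hB (sq_nonneg (a*q)), mul_nonneg hB (sq_nonneg (a*qt)),
    mul_nonneg hB (sq_nonneg (b*p)), mul_nonneg hB (sq_nonneg (b*pt))]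

noncomputable def diracN1 (m α β : ℝ) (u v : ℂ) : ℂ :=
  Complex.I * m * v + Complex.I * α * u * ((‖v‖ : ℂ))^2 +
    Complex.I * 2 * β * ((starRingEnd ℂ) u * v + u * (starRingEnd ℂ) v) * v

noncomputable def diracN2 (m α β : ℝ) (u v : ℂ) : ℂ :=
  Complex.I * m * u + Complex.I * α * v * ((‖u‖ : ℂ))^2 +
    Complex.I * 2 * β * ((starRingEnd ℂ) u * v + u * (starRingEnd ℂ) v) * u

theorem stmt7 (m α β τ : ℝ) (hm : 0 ≤ m) (hτ : 0 < τ)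
    (u v ut vt : ℝ → ℂ)
    (hu : ∀ s, HasDerivAt u (diracN1 m α β (u s) (v s)) s)
    (hv : ∀ s, HasDerivAt v (diracN2 m α β (u s) (v s)) s)
    (hut : ∀ s, HasDerivAt ut (diracN1 m α β (ut s) (vt s)) s)
    (hvt : ∀ s, HasDerivAt vt (diracN2 m α β (ut s) (vt s)) s) :
    ∀ s ∈ Set.Icc (0:ℝ) τ,
      deriv (fun t => ‖u t - ut t‖^2 + ‖v t - vt t‖^2) s
        ≤ 2 * (4 * (|α| + 4 * |β|)) *
          (‖u s - ut s‖^2 * (‖v s‖^2 + ‖vt s‖^2)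
            + ‖v s - vt s‖^2 * (‖u s‖^2 + ‖ut s‖^2)) := by
  intro s _
  set Us : ℂ := u s - ut s with hUs
  set Vs : ℂ := v s - vt s with hVs
  set DU : ℂ := diracN1 m α β (u s) (v s) - diracN1 m α β (ut s) (vt s) with hDU
  set DV : ℂ := diracN2 m α β (u s) (v s) - diracN2 m α β (ut s) (vt s) with hDV
  have hU : HasDerivAt (fun t => u t - ut t) DU s := (hu s).sub (hut s)
  have hV : HasDerivAt (fun t => v t - vt t) DV s := (hv s).sub (hvt s)
  have hL : HasDerivAt (fun t => ‖u t - ut t‖^2 + ‖v t - vt t‖^2)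
      (2 * (inner ℝ Us DU : ℝ) + 2 * (inner ℝ Vs DV : ℝ)) s := hU.norm_sq.add hV.norm_sq
  rw [hL.deriv, Complex.inner, Complex.inner, mul_comm DU, mul_comm DV]
  -- pieces
  set B : ℂ := (starRingEnd ℂ) (u s) * v s + u s * (starRingEnd ℂ) (v s) with hB
  set Bt : ℂ := (starRingEnd ℂ) (ut s) * vt s + ut s * (starRingEnd ℂ) (vt s) with hBt
  set P : ℂ := u s * v s * (starRingEnd ℂ) (v s) - ut s * vt s * (starRingEnd ℂ) (vt s) with hP
  set Q : ℂ := v s * u s * (starRingEnd ℂ) (u s) - vt s * ut s * (starRingEnd ℂ) (ut s) with hQ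
  set R : ℂ := B * v s - Bt * vt s with hR
  set T : ℂ := B * u s - Bt * ut s with hT
  have hDU' : DU = Complex.I*(m:ℂ)*Vs + Complex.I*(α:ℂ)*P + Complex.I*2*(β:ℂ)*R := by
    rw [hDU, hR, hP, hVs, hB, hBt]
    simp only [diracN1, sqcast]
    ring
  have hDV' : DV = Complex.I*(m:ℂ)*Us + Complex.I*(α:ℂ)*Q + Complex.I*2*(β:ℂ)*T := by
    rw [hDV, hT, hQ, hUs, hB, hBt]
    simp only [diracN2, sqcast]
    ring
  -- real abbreviations
  set a : ℝ := ‖Us‖ with ha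
  set b : ℝ := ‖Vs‖ with hb
  set p : ℝ := ‖u s‖ with hp
  set q : ℝ := ‖v s‖ with hq
  set pt : ℝ := ‖ut s‖ with hpt
  set qt : ℝ := ‖vt s‖ with hqt
  -- norm bounds
  have hPn : ‖P‖ ≤ a*q*q + pt*b*q + pt*qt*b := by
    have hid : P = Us * v s * (starRingEnd ℂ) (v s) + (ut s * Vs * (starRingEnd ℂ) (v s)
        + ut s * vt s * (starRingEnd ℂ) Vs) := by
      rw [hP, hUs, hVs]; simp only [map_sub]; ring
    rw [hid]
    refine le_trans (norm_add_le _ _) (le_trans (add_le_add_right (norm_add_le _ _) _) ?_)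
    simp only [norm_mul, RCLike.norm_conj, ← ha, ← hb, ← hp, ← hq, ← hpt, ← hqt]
    linarith
  have hQn : ‖Q‖ ≤ b*p*p + qt*a*p + qt*pt*a := by
    have hid : Q = Vs * u s * (starRingEnd ℂ) (u s) + (vt s * Us * (starRingEnd ℂ) (u s)
        + vt s * ut s * (starRingEnd ℂ) Us) := by
      rw [hQ, hUs, hVs]; simp only [map_sub]; ring
    rw [hid]
    refine le_trans (norm_add_le _ _) (le_trans (add_le_add_right (norm_add_le _ _) _) ?_)
    simp only [norm_mul, RCLike.norm_conj, ← ha, ← hb, ← hp, ← hq, ← hpt, ← hqt]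
    linarith
  have hBn : ‖B‖ ≤ 2*(p*q) := by
    rw [hB]
    refine le_trans (norm_add_le _ _) ?_
    simp only [norm_mul, RCLike.norm_conj, ← hp, ← hq]
    linarith
  have hBdn : ‖(starRingEnd ℂ) Us * v s + (starRingEnd ℂ) (ut s) * Vs
      + Us * (starRingEnd ℂ) (v s) + ut s * (starRingEnd ℂ) Vs‖
      ≤ a*q + pt*b + a*q + pt*b := by
    refine le_trans (norm_add_le _ _) (le_trans (add_le_add_left (le_trans (norm_add_le _ _)
      (add_le_add_left (norm_add_le _ _) _)) _) ?_)
    simp only [norm_mul, RCLike.norm_conj, ← ha, ← hb, ← hp, ← hq, ← hpt, ← hqt]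
    linarith
  have hRn : ‖R‖ ≤ 2*(p*q)*b + (a*q + pt*b + a*q + pt*b)*qt := by
    have hid : R = B * Vs + ((starRingEnd ℂ) Us * v s + (starRingEnd ℂ) (ut s) * Vs
        + Us * (starRingEnd ℂ) (v s) + ut s * (starRingEnd ℂ) Vs) * vt s := by
      rw [hR, hB, hBt, hUs, hVs]; simp only [map_sub]; ring
    rw [hid]
    refine le_trans (norm_add_le _ _) ?_
    simp only [norm_mul]
    exact add_le_add (mul_le_mul_of_nonneg_right hBn (norm_nonneg _))
      (mul_le_mul_of_nonneg_right hBdn (norm_nonneg _))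
  have hTn : ‖T‖ ≤ 2*(p*q)*a + (a*q + pt*b + a*q + pt*b)*pt := by
    have hid : T = B * Us + ((starRingEnd ℂ) Us * v s + (starRingEnd ℂ) (ut s) * Vs
        + Us * (starRingEnd ℂ) (v s) + ut s * (starRingEnd ℂ) Vs) * ut s := by
      rw [hT, hB, hBt, hUs, hVs]; simp only [map_sub]; ring
    rw [hid]
    refine le_trans (norm_add_le _ _) ?_
    simp only [norm_mul]
    exact add_le_add (mul_le_mul_of_nonneg_right hBn (norm_nonneg _))
      (mul_le_mul_of_nonneg_right hBdn (norm_nonneg _))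
  have hap : (0:ℝ) ≤ a := norm_nonneg _
  have hbp : (0:ℝ) ≤ b := norm_nonneg _
  -- bounds on the real parts
  have hA1 : ((starRingEnd ℂ) Us * (Complex.I*(α:ℂ)*P)).re
      ≤ |α| * (a * (a*q*q + pt*b*q + pt*qt*b)) := by
    refine le_trans (re_le _) ?_
    have h : ‖(starRingEnd ℂ) Us * (Complex.I*(α:ℂ)*P)‖ = |α| * (a * ‖P‖) := by
      simp only [norm_mul, RCLike.norm_conj, Complex.norm_I, Complex.norm_real,
        Real.norm_eq_abs, ← ha]
      ring
    rw [h]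
    exact mul_le_mul_of_nonneg_left (mul_le_mul_of_nonneg_left hPn hap) (abs_nonneg _)
  have hA2 : ((starRingEnd ℂ) Vs * (Complex.I*(α:ℂ)*Q)).re
      ≤ |α| * (b * (b*p*p + qt*a*p + qt*pt*a)) := by
    refine le_trans (re_le _) ?_
    have h : ‖(starRingEnd ℂ) Vs * (Complex.I*(α:ℂ)*Q)‖ = |α| * (b * ‖Q‖) := by
      simp only [norm_mul, RCLike.norm_conj, Complex.norm_I, Complex.norm_real,
        Real.norm_eq_abs, ← hb]
      ring
    rw [h]
    exact mul_le_mul_of_nonneg_left (mul_le_mul_of_nonneg_left hQn hbp) (abs_nonneg _)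
  have hB1 : ((starRingEnd ℂ) Us * (Complex.I*2*(β:ℂ)*R)).re
      ≤ 2*|β| * (a * (2*(p*q)*b + (a*q + pt*b + a*q + pt*b)*qt)) := by
    refine le_trans (re_le _) ?_
    have h : ‖(starRingEnd ℂ) Us * (Complex.I*2*(β:ℂ)*R)‖ = 2*|β| * (a * ‖R‖) := by
      simp only [norm_mul, RCLike.norm_conj, Complex.norm_I, Complex.norm_real,
        Real.norm_eq_abs, Complex.norm_ofNat, ← ha]
      ring
    rw [h]
    refine mul_le_mul_of_nonneg_left (mul_le_mul_of_nonneg_left hRn hap) ?_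
    positivity
  have hB2 : ((starRingEnd ℂ) Vs * (Complex.I*2*(β:ℂ)*T)).re
      ≤ 2*|β| * (b * (2*(p*q)*a + (a*q + pt*b + a*q + pt*b)*pt)) := by
    refine le_trans (re_le _) ?_
    have h : ‖(starRingEnd ℂ) Vs * (Complex.I*2*(β:ℂ)*T)‖ = 2*|β| * (b * ‖T‖) := by
      simp only [norm_mul, RCLike.norm_conj, Complex.norm_I, Complex.norm_real,
        Real.norm_eq_abs, Complex.norm_ofNat, ← hb]
      ring
    rw [h]
    refine mul_le_mul_of_nonneg_left (mul_le_mul_of_nonneg_left hTn hbp) ?_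
    positivity
  have h0 := canc m Us Vs
  have hresum : ((starRingEnd ℂ) Us * DU).re + ((starRingEnd ℂ) Vs * DV).re
      = (((starRingEnd ℂ) Us * (Complex.I*(m:ℂ)*Vs)).re
          + ((starRingEnd ℂ) Vs * (Complex.I*(m:ℂ)*Us)).re)
        + ((starRingEnd ℂ) Us * (Complex.I*(α:ℂ)*P)).re
        + ((starRingEnd ℂ) Vs * (Complex.I*(α:ℂ)*Q)).re
        + ((starRingEnd ℂ) Us * (Complex.I*2*(β:ℂ)*R)).re
        + ((starRingEnd ℂ) Vs * (Complex.I*2*(β:ℂ)*T)).re := by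
    rw [hDU', hDV']
    simp only [mul_add, Complex.add_re]
    ring
  have hy := young a b p q pt qt (|α|) (|β|) (abs_nonneg α) (abs_nonneg β)
  linarith [hy, h0, hresum, hA1, hA2, hB1, hB2]
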